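/- Define α₀(s,t) = (sin s·cos t, sin s·sin t, cos s), α₁(s,t) = (-sin t, cos t, 0), α₂(s,t) = (-cos s·cos t, -cos s·sin t, sin s), and g_s(t) = (√2/2)(α₀(s,t) + cos(3t)·α₁(s,t) + sin(3t)·α₂(s,t)). Then for all s ∈ [0,π] and all t, the point g_s(t) lies on the unit sphere S² and det(g_s(t), ∂_t g_s(t), ∂_t² g_s(t)) > 0. -/

import Mathlib

noncomputable section

open Real Matrix

/-- Determinant of the 3×3 matrix whose *columns* are `v₁, v₂, v₃`. -/
def det3 (v₁ v₂ v₃ : Fin 3 → ℝ) : ℝ :=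
  Matrix.det (Matrix.of ![v₁, v₂, v₃])ᵀ

/-- `v` lies on the unit sphere `S² ⊂ ℝ³`. -/
def onSphere (v : Fin 3 → ℝ) : Prop :=
  v 0 ^ 2 + v 1 ^ 2 + v 2 ^ 2 = 1

/-- Euclidean norm on `ℝ³`. -/
def enorm3 (v : Fin 3 → ℝ) : ℝ :=
  Real.sqrt (v 0 ^ 2 + v 1 ^ 2 + v 2 ^ 2)

/-- Cross product on `ℝ³`. -/
def cross3 (u v : Fin 3 → ℝ) : Fin 3 → ℝ :=
  ![u 1 * v 2 - u 2 * v 1, u 2 * v 0 - u 0 * v 2, u 0 * v 1 - u 1 * v 0]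

/-- The frame of a spherical immersion: the matrix with columns
`γ(t)`, `γ'(t)/|γ'(t)|` and `γ(t) × (γ'(t)/|γ'(t)|)`. -/
def frame (γ : ℝ → Fin 3 → ℝ) (t : ℝ) : Matrix (Fin 3) (Fin 3) ℝ :=
  (Matrix.of
    ![γ t, (enorm3 (deriv γ t))⁻¹ • deriv γ t,
      cross3 (γ t) ((enorm3 (deriv γ t))⁻¹ • deriv γ t)])ᵀ

/-- The circle `ν_θ`. -/
def nuTheta (θ : ℝ) (t : ℝ) : Fin 3 → ℝ :=
  ![cos θ ^ 2 + sin θ ^ 2 * cos (2 * π * t),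
    sin θ * sin (2 * π * t),
    cos θ * sin θ * (1 - cos (2 * π * t))]

def alpha0 (s t : ℝ) : Fin 3 → ℝ := ![sin s * cos t, sin s * sin t, cos s]

def alpha1 (_s t : ℝ) : Fin 3 → ℝ := ![-sin t, cos t, 0]

def alpha2 (s t : ℝ) : Fin 3 → ℝ := ![-cos s * cos t, -cos s * sin t, sin s]

/-- The family of curves `g_s(t)` from the paper. -/
def gCurve (s : ℝ) (t : ℝ) : Fin 3 → ℝ :=
  (Real.sqrt 2 / 2) •
    (alpha0 s t + cos (3 * t) • alpha1 s t + sin (3 * t) • alpha2 s t)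

lemma fpos (K x : ℝ) (h : x^2 + K^2 ≤ 1) :
    0 < 27 + 29*K + 9*K^2 - K^3 + (11-3*K^2)*x - 9*x^2 - 3*K*x^2 - x^3 := by
  have hK : K^2 ≤ 1 := by nlinarith [sq_nonneg x]
  have hx : x^2 ≤ 1 := by nlinarith [sq_nonneg K]
  have hK1 : -1 ≤ K := by nlinarith
  have hK2 : K ≤ 1 := by nlinarith
  have hx1 : -1 ≤ x := by nlinarith
  have hx2 : x ≤ 1 := by nlinarith
  nlinarith [sq_nonneg (x+1), sq_nonneg (K+1),
    mul_nonneg (by linarith : (0:ℝ) ≤ 1+K) (sq_nonneg (x+1)),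
    mul_nonneg (by linarith : (0:ℝ) ≤ 1+x) (sq_nonneg (K+1)),
    mul_nonneg (by linarith : (0:ℝ) ≤ 1-x) (sq_nonneg (K-1)),
    mul_nonneg (by linarith : (0:ℝ) ≤ 1-K) (sq_nonneg (x-1)),
    sq_nonneg (x+K), sq_nonneg (x-K)]

/-- First derivative of `gCurve s`. -/
def G1v (s t : ℝ) : Fin 3 → ℝ :=
  ![Real.sqrt 2 / 2 * ((3 + cos s) * (sin t * sin (3*t)) - sin s * sin t
      - (1 + 3*cos s) * (cos t * cos (3*t))),
    Real.sqrt 2 / 2 * (sin s * cos t - (1 + 3*cos s) * (sin t * cos (3*t))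
      - (3 + cos s) * (cos t * sin (3*t))),
    Real.sqrt 2 / 2 * (3 * sin s * cos (3*t))]

/-- Second derivative of `gCurve s`. -/
def G2v (s t : ℝ) : Fin 3 → ℝ :=
  ![Real.sqrt 2 / 2 * ((10 + 6*cos s) * (sin t * cos (3*t))
      + (6 + 10*cos s) * (cos t * sin (3*t)) - sin s * cos t),
    Real.sqrt 2 / 2 * ((6 + 10*cos s) * (sin t * sin (3*t)) - sin s * sin t
      - (10 + 6*cos s) * (cos t * cos (3*t))),
    Real.sqrt 2 / 2 * (-(9 * sin s) * sin (3*t))]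

lemma hasDerivAt_gCurve (s t : ℝ) : HasDerivAt (gCurve s) (G1v s t) t := by
  have hst := Real.hasDerivAt_sin t
  have hct := Real.hasDerivAt_cos t
  have h3 : HasDerivAt (fun x : ℝ => 3 * x) 3 t := by
    simpa using (hasDerivAt_id t).const_mul (3:ℝ)
  have hu : HasDerivAt (fun x : ℝ => Real.cos (3*x)) (-Real.sin (3*t) * 3) t :=
    (Real.hasDerivAt_cos (3*t)).comp t h3
  have hv : HasDerivAt (fun x : ℝ => Real.sin (3*x)) (Real.cos (3*t) * 3) t :=
    (Real.hasDerivAt_sin (3*t)).comp t h3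
  apply hasDerivAt_pi.2
  intro i
  fin_cases i
  · have hF : (fun x => gCurve s x 0)
        = (fun x => Real.sqrt 2 / 2 * (sin s * cos x - cos (3*x) * sin x
            - sin (3*x) * (cos s * cos x))) := by
      funext x; simp [gCurve, alpha0, alpha1, alpha2]; try ring
    show HasDerivAt (fun x => gCurve s x 0) (G1v s t 0) t
    rw [hF]
    have H := (((hct.const_mul (Real.sin s)).sub (hu.mul hst)).sub
      (hv.mul (hct.const_mul (Real.cos s)))).const_mul (Real.sqrt 2 / 2)
    convert H using 1
    all_goals first | rfl | (funext x; simp) | (simp [G1v]; try ring)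
  · have hF : (fun x => gCurve s x 1)
        = (fun x => Real.sqrt 2 / 2 * (sin s * sin x + cos (3*x) * cos x
            - sin (3*x) * (cos s * sin x))) := by
      funext x; simp [gCurve, alpha0, alpha1, alpha2]; try ring
    show HasDerivAt (fun x => gCurve s x 1) (G1v s t 1) t
    rw [hF]
    have H := (((hst.const_mul (Real.sin s)).add (hu.mul hct)).sub
      (hv.mul (hst.const_mul (Real.cos s)))).const_mul (Real.sqrt 2 / 2)
    convert H using 1
    all_goals first | rfl | (funext x; simp) | (simp [G1v]; try ring)
  · have hF : (fun x => gCurve s x 2)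
        = (fun x => Real.sqrt 2 / 2 * (cos s + sin (3*x) * sin s)) := by
      funext x; simp [gCurve, alpha0, alpha1, alpha2]; try ring
    show HasDerivAt (fun x => gCurve s x 2) (G1v s t 2) t
    rw [hF]
    have H := ((hasDerivAt_const t (Real.cos s)).add
      (hv.mul (hasDerivAt_const t (Real.sin s)))).const_mul (Real.sqrt 2 / 2)
    convert H using 1
    all_goals first | rfl | (funext x; simp) | (simp [G1v]; try ring)

lemma hasDerivAt_G1v (s t : ℝ) : HasDerivAt (G1v s) (G2v s t) t := by
  have hst := Real.hasDerivAt_sin t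
  have hct := Real.hasDerivAt_cos t
  have h3 : HasDerivAt (fun x : ℝ => 3 * x) 3 t := by
    simpa using (hasDerivAt_id t).const_mul (3:ℝ)
  have hu : HasDerivAt (fun x : ℝ => Real.cos (3*x)) (-Real.sin (3*t) * 3) t :=
    (Real.hasDerivAt_cos (3*t)).comp t h3
  have hv : HasDerivAt (fun x : ℝ => Real.sin (3*x)) (Real.cos (3*t) * 3) t :=
    (Real.hasDerivAt_sin (3*t)).comp t h3
  apply hasDerivAt_pi.2
  intro i
  fin_cases i
  · show HasDerivAt (fun x => G1v s x 0) (G2v s t 0) t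
    have hF : (fun x => G1v s x 0)
        = (fun x => Real.sqrt 2 / 2 * ((3 + cos s) * (sin x * sin (3*x)) - sin s * sin x
            - (1 + 3*cos s) * (cos x * cos (3*x)))) := by
      funext x; simp [G1v]
    rw [hF]
    have H := ((((hst.mul hv).const_mul (3 + Real.cos s)).sub
      (hst.const_mul (Real.sin s))).sub
      ((hct.mul hu).const_mul (1 + 3*Real.cos s))).const_mul (Real.sqrt 2 / 2)
    convert H using 1
    all_goals first | rfl | (funext x; simp) | (simp [G2v]; try ring)
  · show HasDerivAt (fun x => G1v s x 1) (G2v s t 1) t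
    have hF : (fun x => G1v s x 1)
        = (fun x => Real.sqrt 2 / 2 * (sin s * cos x - (1 + 3*cos s) * (sin x * cos (3*x))
            - (3 + cos s) * (cos x * sin (3*x)))) := by
      funext x; simp [G1v]
    rw [hF]
    have H := (((hct.const_mul (Real.sin s)).sub
      ((hst.mul hu).const_mul (1 + 3*Real.cos s))).sub
      ((hct.mul hv).const_mul (3 + Real.cos s))).const_mul (Real.sqrt 2 / 2)
    convert H using 1
    all_goals first | rfl | (funext x; simp) | (simp [G2v]; try ring)
  · show HasDerivAt (fun x => G1v s x 2) (G2v s t 2) t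
    have hF : (fun x => G1v s x 2)
        = (fun x => Real.sqrt 2 / 2 * (3 * sin s * cos (3*x))) := by
      funext x; simp [G1v]
    rw [hF]
    have H := (hu.const_mul (3 * Real.sin s)).const_mul (Real.sqrt 2 / 2)
    convert H using 1
    all_goals first | rfl | (funext x; simp) | (simp [G2v]; try ring)

/-- For all `s ∈ [0,π]` and all `t`, `g_s(t)` lies on `S²` and
`det(g_s(t), ∂_t g_s(t), ∂_t² g_s(t)) > 0`. -/
theorem gCurve_sphere_and_convex (s : ℝ) (hs : s ∈ Set.Icc 0 π) (t : ℝ) :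
    onSphere (gCurve s t) ∧
    0 < det3 (gCurve s t) (deriv (gCurve s) t) (deriv (deriv (gCurve s)) t) := by
  have hw : Real.sqrt 2 ^ 2 = 2 := Real.sq_sqrt (by norm_num)
  have ht : Real.sin t ^ 2 + Real.cos t ^ 2 = 1 := Real.sin_sq_add_cos_sq t
  have h3t : Real.cos (3*t) ^ 2 + Real.sin (3*t) ^ 2 = 1 := Real.cos_sq_add_sin_sq (3*t)
  have hss : Real.sin s ^ 2 + Real.cos s ^ 2 = 1 := Real.sin_sq_add_cos_sq s
  constructor
  · simp only [onSphere, gCurve, alpha0, alpha1, alpha2, Pi.smul_apply, Pi.add_apply,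
      Matrix.cons_val_zero, Matrix.cons_val_one, Matrix.head_cons, smul_eq_mul,
      Matrix.cons_val_two, Matrix.tail_cons]
    linear_combination
      ((Real.sqrt 2/2)^2 * (1*(Real.sin s)^2 + -2*(Real.sin (3*t))*(Real.sin s)*(Real.cos s) + 1*(Real.sin (3*t))^2*(Real.cos s)^2 + 1*(Real.cos (3*t))^2)) * ht
      + ((Real.sqrt 2/2)^2 * (1*(Real.cos s)^2 + 1*(Real.sin s)^2)) * h3t
      + ((Real.sqrt 2/2)^2 * (2 + -1*(Real.cos (3*t))^2)) * hss
      + (1/2) * hw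
  · have hd1 : deriv (gCurve s) = G1v s := funext fun x => (hasDerivAt_gCurve s x).deriv
    rw [hd1, (hasDerivAt_G1v s t).deriv]
    have hS : 0 ≤ Real.sin s := Real.sin_nonneg_of_nonneg_of_le_pi hs.1 hs.2
    have hxk : (Real.sin s * Real.sin (3*t))^2 + Real.cos s^2 ≤ 1 := by
      nlinarith [sq_nonneg (Real.sin s * Real.cos (3*t))]
    have hf := fpos (Real.cos s) (Real.sin s * Real.sin (3*t)) hxk
    have hdet : det3 (gCurve s t) (G1v s t) (G2v s t)
        = (Real.sqrt 2/2)^3 * ((3+Real.cos s)^3 - 3*Real.sin s^2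
          + (9-Real.cos s^2)*Real.sin s*Real.sin (3*t)
          + Real.sin s^2*(Real.cos (3*t)^2*(3+2*Real.cos s) - Real.sin (3*t)^2*(6+Real.cos s))
          + Real.sin s^3*Real.sin (3*t)*(1+Real.cos (3*t)^2)) := by
      simp only [det3, Matrix.det_fin_three, Matrix.transpose_apply, Matrix.of_apply]
      simp [gCurve, alpha0, alpha1, alpha2, G1v, G2v]
      linear_combination
        ((Real.sqrt 2/2)^3 * (1*(Real.sin s)^2*(Real.cos s) + -9*(Real.sin (3*t))*(Real.sin s)*(Real.cos s) + -11*(Real.sin (3*t))*(Real.sin s)*(Real.cos s)^2 + -8*(Real.sin (3*t))*(Real.sin s)^3 + 18*(Real.sin (3*t))^2*(Real.cos s) + 36*(Real.sin (3*t))^2*(Real.cos s)^2 + 10*(Real.sin (3*t))^2*(Real.cos s)^3 + 18*(Real.sin (3*t))^2*(Real.sin s)^2 + 7*(Real.sin (3*t))^2*(Real.sin s)^2*(Real.cos s) + 18*(Real.sin (3*t))^3*(Real.sin s) + 9*(Real.sin (3*t))^3*(Real.sin s)*(Real.cos s) + 1*(Real.sin (3*t))^3*(Real.sin s)*(Real.cos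 s)^2 + 10*(Real.cos (3*t))^2*(Real.cos s) + 36*(Real.cos (3*t))^2*(Real.cos s)^2 + 18*(Real.cos (3*t))^2*(Real.cos s)^3 + 27*(Real.cos (3*t))^2*(Real.sin s)^2 + 18*(Real.cos (3*t))^2*(Real.sin s)^2*(Real.cos s) + 19*(Real.cos (3*t))^2*(Real.sin (3*t))*(Real.sin s) + 9*(Real.cos (3*t))^2*(Real.sin (3*t))*(Real.sin s)*(Real.cos s))) * ht
        + ((Real.sqrt 2/2)^3 * (18*(Real.cos s) + 36*(Real.cos s)^2 + 10*(Real.cos s)^3 + 24*(Real.sin s)^2 + 8*(Real.sin s)^2*(Real.cos s) + 18*(Real.sin (3*t))*(Real.sin s) + 9*(Real.sin (3*t))*(Real.sin s)*(Real.cos s) + 1*(Real.sin (3*t))*(Real.sin s)*(Real.cos s)^2)) * h3t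
        + ((Real.sqrt 2/2)^3 * (27 + 9*(Real.cos s) + -9*(Real.sin (3*t))*(Real.sin s) + 8*(Real.cos (3*t))^2*(Real.cos s) + -1*(Real.cos (3*t))^2*(Real.sin (3*t))*(Real.sin s))) * hss
    rw [hdet]
    have hD : 0 < (3+Real.cos s)^3 - 3*Real.sin s^2
          + (9-Real.cos s^2)*Real.sin s*Real.sin (3*t)
          + Real.sin s^2*(Real.cos (3*t)^2*(3+2*Real.cos s) - Real.sin (3*t)^2*(6+Real.cos s))
          + Real.sin s^3*Real.sin (3*t)*(1+Real.cos (3*t)^2) := by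
      have hDf : (3+Real.cos s)^3 - 3*Real.sin s^2
          + (9-Real.cos s^2)*Real.sin s*Real.sin (3*t)
          + Real.sin s^2*(Real.cos (3*t)^2*(3+2*Real.cos s) - Real.sin (3*t)^2*(6+Real.cos s))
          + Real.sin s^3*Real.sin (3*t)*(1+Real.cos (3*t)^2)
          = 27 + 29*Real.cos s + 9*Real.cos s^2 - Real.cos s^3
            + (11-3*Real.cos s^2)*(Real.sin s * Real.sin (3*t))
            - 9*(Real.sin s * Real.sin (3*t))^2
            - 3*Real.cos s*(Real.sin s * Real.sin (3*t))^2
            - (Real.sin s * Real.sin (3*t))^3 := by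
        linear_combination
          (3*Real.sin s^2 + 2*Real.sin s^2*Real.cos s + Real.sin (3*t)*Real.sin s^3) * h3t
          + (2*Real.cos s + 2*Real.sin (3*t)*Real.sin s) * hss
      rw [hDf]
      exact hf
    have hc : (0:ℝ) < (Real.sqrt 2/2)^3 := by positivity
    exact mul_pos hc hD
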